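/- Consider the planar system dv/dt = η(κ_r + α − (α/w)‖v‖²)v + ω̃ J v + ηY v_g with η > 0, α > 0, w > 0. Let W(v) = ‖v‖². If ‖v‖ > max{v_g, √(w(1 + (κ_r + |y|)/α))} (with v_g = ‖velocity of grid input‖ bound satisfying ‖Y v_g‖ ≤ |y| v_g), then dW/dt < 0 along trajectories. Consequently every trajectory is bounded and ultimately enters and remains in the ball of radius v_m = max{v_g, √(w(1 + (κ_r + |y|)/α))}. -/

import Mathlib

private lemma ub_aux1 (η α w κr yabs vg r : ℝ) (hη : 0 < η) (hα : 0 < α) (hw : 0 < w)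
    (hy : 0 < yabs) (hvg : 0 ≤ vg) (hr1 : vg < r)
    (hr2 : w * (1 + (κr + yabs) / α) < r ^ 2) :
    2 * (η * (κr + α - (α / w) * r ^ 2) * r ^ 2 + r * (η * (yabs * vg))) < 0 := by
  have hr0 : 0 < r := lt_of_le_of_lt hvg hr1
  have hc : κr + α - (α / w) * r ^ 2 < -yabs := by
    have h := mul_lt_mul_of_pos_left hr2 (div_pos hα hw)
    have heq : (α / w) * (w * (1 + (κr + yabs) / α)) = α + κr + yabs := by
      field_simp; ring
    linarith [heq ▸ h]
  have ha2 := mul_lt_mul_of_pos_left hc (mul_pos hη (mul_pos hr0 hr0))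
  have hb2 := mul_lt_mul_of_pos_left hr1 (mul_pos (mul_pos hη hy) hr0)
  nlinarith [ha2, hb2]

private lemma ub_aux2 (η α w κr yabs vg r m δ : ℝ) (hη : 0 < η) (hα : 0 < α) (hw : 0 < w)
    (hy : 0 < yabs) (hδ : 0 < δ) (hm0 : 0 ≤ m) (hmvg : vg ≤ m)
    (hm2 : w * (1 + (κr + yabs) / α) ≤ m ^ 2) (hr1 : m + δ ≤ r) :
    2 * (η * (κr + α - (α / w) * r ^ 2) * r ^ 2 + r * (η * (yabs * vg)))
      ≤ -(2 * η * ((α / w) * (2 * m * δ + δ ^ 2)) * (m + δ) ^ 2) := by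
  set ε := (α / w) * (2 * m * δ + δ ^ 2) with hε
  have hεpos : 0 < ε := by positivity
  have hr0 : 0 < r := lt_of_lt_of_le (by linarith) hr1
  have hr2 : (m + δ) ^ 2 ≤ r ^ 2 := by nlinarith
  have hc : κr + α - (α / w) * r ^ 2 ≤ -yabs - ε := by
    have h := mul_le_mul_of_nonneg_left hm2 (le_of_lt (div_pos hα hw))
    have heq : (α / w) * (w * (1 + (κr + yabs) / α)) = α + κr + yabs := by
      field_simp; ring
    have h2 : (α / w) * (m + δ) ^ 2 ≤ (α / w) * r ^ 2 :=
      mul_le_mul_of_nonneg_left hr2 (le_of_lt (div_pos hα hw))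
    have h3 : (α / w) * (m + δ) ^ 2 = (α / w) * m ^ 2 + ε := by rw [hε]; ring
    linarith [heq ▸ h]
  set c := κr + α - (α / w) * r ^ 2 with hcdef
  have h2 : c * r ^ 2 + yabs * vg * r ≤ -ε * r ^ 2 := by
    have ha : c * r ^ 2 ≤ (-yabs - ε) * r ^ 2 :=
      mul_le_mul_of_nonneg_right hc (sq_nonneg r)
    have hvr : vg * r ≤ r * r := mul_le_mul_of_nonneg_right (by linarith) hr0.le
    have hb : yabs * (vg * r) ≤ yabs * (r * r) := mul_le_mul_of_nonneg_left hvr hy.le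
    nlinarith [ha, hb]
  have h3 : -ε * r ^ 2 ≤ -ε * (m + δ) ^ 2 := by
    nlinarith [mul_le_mul_of_nonneg_left hr2 hεpos.le]
  nlinarith [mul_le_mul_of_nonneg_left (le_trans h2 h3) (le_of_lt hη)]

/-- Proposition 6: trajectory boundedness and ultimate bound, with `ℝ²` identified
with `ℂ` (so `J` is multiplication by `I`). `g` stands for `η Y v_g`, with
`‖Y v_g‖ ≤ |y| v_g`. -/
theorem ultimate_boundedness (η α w κr ωt yabs vg : ℝ) (hη : 0 < η) (hα : 0 < α)
    (hw : 0 < w) (hy : 0 < yabs) (hvg : 0 ≤ vg)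
    (g : ℂ) (hg : ‖g‖ ≤ η * (yabs * vg))
    (v : ℝ → ℂ)
    (hv : ∀ t : ℝ, HasDerivAt v
      (((η * (κr + α - (α / w) * ‖v t‖ ^ 2) : ℝ) : ℂ) * v t
        + ((ωt : ℝ) : ℂ) * Complex.I * v t + g) t) :
    (∀ t : ℝ,
      ‖v t‖ > max vg (Real.sqrt (w * (1 + (κr + yabs) / α))) →
      ∃ D : ℝ, HasDerivAt (fun s => ‖v s‖ ^ 2) D t ∧ D < 0) ∧
    (∀ δ : ℝ, 0 < δ → ∃ T : ℝ, ∀ t ≥ T,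
      ‖v t‖ ≤ max vg (Real.sqrt (w * (1 + (κr + yabs) / α))) + δ) := by
  set m := max vg (Real.sqrt (w * (1 + (κr + yabs) / α))) with hm
  have hm0 : 0 ≤ m := le_trans (Real.sqrt_nonneg _) (le_max_right _ _)
  have hmvg : vg ≤ m := le_max_left _ _
  have hm2 : w * (1 + (κr + yabs) / α) ≤ m ^ 2 := by
    rcases le_or_gt 0 (w * (1 + (κr + yabs) / α)) with h | h
    · calc w * (1 + (κr + yabs) / α) = Real.sqrt (w * (1 + (κr + yabs) / α)) ^ 2 :=
          (Real.sq_sqrt h).symm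
        _ ≤ m ^ 2 := pow_le_pow_left₀ (Real.sqrt_nonneg _) (le_max_right _ _) 2
    · nlinarith [sq_nonneg m]
  set W : ℝ → ℝ := fun s => ‖v s‖ ^ 2 with hWdef
  set e : ℝ → ℂ := fun t =>
    (((η * (κr + α - (α / w) * ‖v t‖ ^ 2) : ℝ)) : ℂ) * v t
      + ((ωt : ℝ) : ℂ) * Complex.I * v t + g with he
  have hv' : ∀ t, HasDerivAt v (e t) t := hv
  set D : ℝ → ℝ := fun t => 2 * ((starRingEnd ℂ) (v t) * e t).re with hD
  have hW : ∀ t, HasDerivAt W (D t) t := by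
    intro t
    have h1 : HasDerivAt (fun s => (v s).re) ((e t).re) t :=
      Complex.reCLM.hasFDerivAt.comp_hasDerivAt t (hv' t)
    have h2 : HasDerivAt (fun s => (v s).im) ((e t).im) t :=
      Complex.imCLM.hasFDerivAt.comp_hasDerivAt t (hv' t)
    have h3 := (h1.pow 2).add (h2.pow 2)
    have hfun : W = fun s => (v s).re ^ 2 + (v s).im ^ 2 := by
      funext s
      show ‖v s‖ ^ 2 = _
      rw [Complex.sq_norm, Complex.normSq_apply]; ring
    rw [hfun]
    refine h3.congr_deriv ?_
    simp [hD, Complex.mul_re]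
    ring
  have hWd : Differentiable ℝ W := fun t => (hW t).differentiableAt
  have hWderiv : ∀ t, deriv W t = D t := fun t => (hW t).deriv
  have hWc : Continuous W := hWd.continuous
  have hWnn : ∀ t, 0 ≤ W t := fun t => sq_nonneg _
  -- bound on D
  have hDle : ∀ t, D t ≤ 2 * (η * (κr + α - (α / w) * ‖v t‖ ^ 2)
      * ‖v t‖ ^ 2 + ‖v t‖ * (η * (yabs * vg))) := by
    intro t
    have hre : ((starRingEnd ℂ) (v t) * e t).re
        = η * (κr + α - (α / w) * ‖v t‖ ^ 2) * ‖v t‖ ^ 2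
          + ((starRingEnd ℂ) (v t) * g).re := by
      have hn : (starRingEnd ℂ) (v t) * v t = ((Complex.normSq (v t) : ℝ) : ℂ) :=
        Complex.normSq_eq_conj_mul_self.symm
      have hsplit : (starRingEnd ℂ) (v t) * e t
          = (((η * (κr + α - (α / w) * ‖v t‖ ^ 2) : ℝ)) : ℂ)
              * ((starRingEnd ℂ) (v t) * v t)
            + ((ωt : ℝ) : ℂ) * Complex.I * ((starRingEnd ℂ) (v t) * v t)
            + (starRingEnd ℂ) (v t) * g := by
        rw [he]; ring
      rw [hsplit, hn]
      simp [Complex.add_re, Complex.mul_re, Complex.sq_norm]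
    have hgb : ((starRingEnd ℂ) (v t) * g).re ≤ ‖v t‖ * (η * (yabs * vg)) := by
      calc ((starRingEnd ℂ) (v t) * g).re ≤ ‖(starRingEnd ℂ) (v t) * g‖ :=
            Complex.re_le_norm _
        _ = ‖v t‖ * ‖g‖ := by rw [norm_mul, Complex.norm_conj]
        _ ≤ ‖v t‖ * (η * (yabs * vg)) :=
            mul_le_mul_of_nonneg_left hg (norm_nonneg _)
    rw [hD]
    simp only
    rw [hre]
    linarith
  constructor
  · intro t ht
    refine ⟨D t, hW t, ?_⟩
    have hr0 : 0 < ‖v t‖ := lt_of_le_of_lt hm0 ht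
    have hr1 : vg < ‖v t‖ := lt_of_le_of_lt hmvg ht
    have hr2 : w * (1 + (κr + yabs) / α) < ‖v t‖ ^ 2 :=
      (Real.sqrt_lt' hr0).mp (lt_of_le_of_lt (le_max_right _ _) ht)
    exact lt_of_le_of_lt (hDle t) (ub_aux1 η α w κr yabs vg _ hη hα hw hy hvg hr1 hr2)
  · intro δ hδ
    set B := (m + δ) ^ 2 with hB
    set K := 2 * η * ((α / w) * (2 * m * δ + δ ^ 2)) * (m + δ) ^ 2 with hK
    have hKpos : 0 < K := by
      have : 0 < m + δ := by linarith
      positivity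
    have key : ∀ t, B ≤ W t → D t ≤ -K := by
      intro t htb
      have hr1 : m + δ ≤ ‖v t‖ := by
        have htb' : (m + δ) ^ 2 ≤ ‖v t‖ ^ 2 := htb
        have h1 := Real.sqrt_le_sqrt htb'
        rwa [Real.sqrt_sq (by linarith), Real.sqrt_sq (norm_nonneg _)] at h1
      exact le_trans (hDle t) (ub_aux2 η α w κr yabs vg _ m δ hη hα hw hy hδ hm0 hmvg hm2 hr1)
    have hreach : ∃ T, W T ≤ B := by
      by_contra hcon
      push_neg at hcon
      have hfd : Differentiable ℝ (fun s => W s + K * s) :=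
        hWd.add ((differentiable_id.const_mul K))
      have hder : ∀ t, deriv (fun s => W s + K * s) t ≤ 0 := by
        intro t
        have h : HasDerivAt (fun s => W s + K * s) (D t + K) t := by
          exact ((hW t).add ((hasDerivAt_id t).const_mul K)).congr_deriv (by ring)
        rw [h.deriv]
        have := key t (le_of_lt (hcon t))
        linarith
      have hmono : Antitone (fun s => W s + K * s) := antitone_of_deriv_nonpos hfd hder
      set T0 := (W 0 + 1) / K with hT0
      have hT0n : 0 ≤ T0 := by positivity
      have := hmono hT0n
      have hKT0 : K * T0 = W 0 + 1 := by
        rw [hT0]; field_simp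
      have hle : W T0 + (W 0 + 1) ≤ W 0 + K * 0 := by
        rw [← hKT0]; simpa using this
      have := hWnn T0
      simp at hle
      linarith
    obtain ⟨T, hT⟩ := hreach
    refine ⟨T, fun t ht => ?_⟩
    have hWt : W t ≤ B := by
      by_contra hcon
      push_neg at hcon
      have hTt : T < t := by
        rcases lt_or_eq_of_le ht with h | h
        · exact h
        · exfalso; rw [h] at hT; linarith
      set S := Set.Icc T t ∩ {s | W s ≤ B} with hS
      have hSne : S.Nonempty := ⟨T, ⟨le_refl T, hTt.le⟩, hT⟩
      have hSbdd : BddAbove S := ⟨t, fun s hs => hs.1.2⟩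
      have hSclosed : IsClosed S :=
        isClosed_Icc.inter (isClosed_le hWc continuous_const)
      set τ := sSup S with hτ
      have hτS : τ ∈ S := hSclosed.csSup_mem hSne hSbdd
      have hτT : T ≤ τ := hτS.1.1
      have hτt : τ ≤ t := hτS.1.2
      have hτB : W τ ≤ B := hτS.2
      have hτlt : τ < t := lt_of_le_of_ne hτt (fun h => by rw [h] at hτB; linarith)
      have hmid : ∀ s ∈ Set.Ioo τ t, B < W s := by
        intro s hs
        by_contra hns
        push_neg at hns
        have hsS : s ∈ S := ⟨⟨le_trans hτT hs.1.le, hs.2.le⟩, hns⟩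
        exact absurd (le_csSup hSbdd hsS) (not_le.mpr hs.1)
      have hanti : StrictAntiOn W (Set.Icc τ t) := by
        apply strictAntiOn_of_deriv_neg (convex_Icc τ t) hWc.continuousOn
        intro s hs
        rw [interior_Icc] at hs
        rw [hWderiv s]
        have := key s (hmid s hs).le
        linarith
      have := hanti ⟨le_refl τ, hτlt.le⟩ ⟨hτlt.le, le_refl t⟩ hτlt
      linarith
    have habs : ‖v t‖ ≤ m + δ := by
      have h1 := Real.sqrt_le_sqrt hWt
      rwa [hWdef, hB, Real.sqrt_sq (norm_nonneg _), Real.sqrt_sq (by linarith)] at h1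
    exact habs
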